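/- arXiv:1404.1866 — 5 statements merged into one kernel-verified Lean document; each statement's English description precedes it below -/
import Mathlib

section
/- For all (ω₁,ω₂) ∈ 𝕋², writing x = χ₁(ω₁,ω₂) and y = χ₂(ω₁,ω₂), both z = ω₁ + ω₁⁻¹ and z = ω₂ + ω₂⁻¹ are roots of the cubic polynomial z³ + (1−x)z² + (y−2)z + 2y − x² + 2x − 1. -/
/-- Character of the 7-dimensional fundamental representation of G₂ on the torus. -/
noncomputable def χ₁ (ω₁ ω₂ : ℂ) : ℂ :=
  1 + ω₁ + ω₁⁻¹ + ω₂ + ω₂⁻¹ + ω₁ * ω₂⁻¹ + ω₁⁻¹ * ω₂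

/-- Character of the 14-dimensional fundamental representation of G₂ on the torus. -/
noncomputable def χ₂ (ω₁ ω₂ : ℂ) : ℂ :=
  χ₁ ω₁ ω₂ + 1 + ω₁ * ω₂ + ω₁⁻¹ * ω₂⁻¹ + ω₁ ^ 2 * ω₂⁻¹ + (ω₁⁻¹) ^ 2 * ω₂
    + ω₁ * (ω₂⁻¹) ^ 2 + ω₁⁻¹ * ω₂ ^ 2

theorem cubic_roots_of_torus_coords :
    ∀ ω₁ ω₂ : ℂ, ‖ω₁‖ = 1 → ‖ω₂‖ = 1 →
      ∀ z : ℂ, (z = ω₁ + ω₁⁻¹ ∨ z = ω₂ + ω₂⁻¹) →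
        z ^ 3 + (1 - χ₁ ω₁ ω₂) * z ^ 2 + (χ₂ ω₁ ω₂ - 2) * z
          + 2 * χ₂ ω₁ ω₂ - (χ₁ ω₁ ω₂) ^ 2 + 2 * χ₁ ω₁ ω₂ - 1 = 0 := by
  intro ω₁ ω₂ h₁ h₂ z hz
  have n₁ : ω₁ ≠ 0 := by intro h; simp [h] at h₁
  have n₂ : ω₂ ≠ 0 := by intro h; simp [h] at h₂
  have e₁ : ω₁ * ω₁⁻¹ = 1 := mul_inv_cancel₀ n₁
  have e₂ : ω₂ * ω₂⁻¹ = 1 := mul_inv_cancel₀ n₂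
  simp only [χ₁, χ₂]
  rcases hz with rfl | rfl
  · linear_combination
      (-2 * ω₂ + ω₂ ^ 2 - ω₁ * ω₂ - 2 * ω₂⁻¹ - 2 * ω₂⁻¹ * ω₂ - ω₂⁻¹ * ω₁ + ω₂⁻¹ ^ 2
        - ω₁⁻¹ * ω₂ - ω₁⁻¹ * ω₂⁻¹) * e₁
      + (-4 - 2 * ω₁ - 2 * ω₁⁻¹) * e₂
  · linear_combination
      (-2 - 2 * ω₂ - 2 * ω₂⁻¹ - 2 * ω₂⁻¹ * ω₂) * e₁
      + (-2 - 2 * ω₁ - ω₁ * ω₂ + ω₁ ^ 2 - ω₂⁻¹ * ω₁ - 2 * ω₁⁻¹ - ω₁⁻¹ * ω₂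
        - ω₁⁻¹ * ω₂⁻¹ + ω₁⁻¹ ^ 2) * e₂
end

section
/- With ζ = e^{2πi/13}: χ₁(ζ, ζ⁴) = (1 + √13)/2 and χ₂(ζ, ζ⁴) = 1, and χ₁(ζ², ζ⁷) = (1 − √13)/2 and χ₂(ζ², ζ⁷) = 1, where χ₁, χ₂ are the fundamental G₂ characters on the torus. -/
open Real in
theorem chi_at_thirteenth_roots :
    χ₁ (Complex.exp (2 * π * Complex.I / 13)) (Complex.exp (2 * π * Complex.I / 13) ^ 4)
        = (1 + Real.sqrt 13) / 2 ∧
    χ₂ (Complex.exp (2 * π * Complex.I / 13)) (Complex.exp (2 * π * Complex.I / 13) ^ 4) = 1 ∧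
    χ₁ (Complex.exp (2 * π * Complex.I / 13) ^ 2) (Complex.exp (2 * π * Complex.I / 13) ^ 7)
        = (1 - Real.sqrt 13) / 2 ∧
    χ₂ (Complex.exp (2 * π * Complex.I / 13) ^ 2) (Complex.exp (2 * π * Complex.I / 13) ^ 7) = 1 := by
  set z : ℂ := Complex.exp (2 * π * Complex.I / 13) with hzdef
  have hprim : IsPrimitiveRoot z 13 := by
    have h := Complex.isPrimitiveRoot_exp 13 (by norm_num)
    have : ((13 : ℕ) : ℂ) = (13 : ℂ) := by norm_num
    rw [this] at h
    exact h
  have h13 : z ^ 13 = 1 := hprim.pow_eq_one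
  have hne1 : z ≠ 1 := hprim.ne_one (by norm_num)
  have hsum : 1 + z + z^2 + z^3 + z^4 + z^5 + z^6 + z^7 + z^8 + z^9 + z^10 + z^11 + z^12 = 0 := by
    have hmul : (z - 1) * (1 + z + z^2 + z^3 + z^4 + z^5 + z^6 + z^7 + z^8 + z^9 + z^10
        + z^11 + z^12) = 0 := by linear_combination h13
    rcases mul_eq_zero.mp hmul with h | h
    · exact absurd (sub_eq_zero.mp h) hne1
    · exact h
  -- the quadratic-residue sum S
  set S : ℂ := z + z^3 + z^4 + z^9 + z^10 + z^12 with hSdef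
  have hSquad : S^2 + S - 3 = 0 := by
    rw [hSdef]
    linear_combination 3 * hsum + (z^11 + 2*z^9 + 2*z^8 + z^7 + 2*z^6 + z^5 + 2*z^3 + 2*z^2
      + 2*z + 6) * h13
  -- S is real
  have hz : ∀ k : ℕ, z ^ k = Complex.exp ((2 * π * k / 13 : ℝ) * Complex.I) := by
    intro k
    rw [hzdef, ← Complex.exp_nat_mul]
    congr 1
    push_cast
    ring
  have hzneg : ∀ k : ℕ, k ≤ 13 → z ^ (13 - k) = Complex.exp (-((2 * π * k / 13 : ℝ) * Complex.I)) := by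
    intro k hk
    have : z ^ (13 - k) * z ^ k = 1 := by
      rw [← pow_add, Nat.sub_add_cancel hk, h13]
    have hzk : z ^ k ≠ 0 := pow_ne_zero _ (Complex.exp_ne_zero _)
    have h1 : z ^ (13 - k) = (z ^ k)⁻¹ := eq_inv_of_mul_eq_one_left this
    rw [h1, hz k, ← Complex.exp_neg]
  have key : ∀ x : ℝ, Complex.exp ((x : ℂ) * Complex.I) + Complex.exp (-((x : ℂ) * Complex.I))
      = 2 * (Real.cos x : ℂ) := by
    intro x
    have h2 : -((x:ℂ) * Complex.I) = ((-x : ℝ) : ℂ) * Complex.I := by push_cast; ring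
    rw [h2, Complex.exp_mul_I, Complex.exp_mul_I, ← Complex.ofReal_cos, ← Complex.ofReal_sin,
      ← Complex.ofReal_cos, ← Complex.ofReal_sin, Real.cos_neg, Real.sin_neg]
    push_cast
    ring
  set r : ℝ := 2 * Real.cos (2*π*1/13) + 2 * Real.cos (2*π*3/13) + 2 * Real.cos (2*π*4/13)
    with hrdef
  have hSr : S = (r : ℂ) := by
    have e1 : z ^ 1 + z ^ 12 = 2 * (Real.cos (2*π*1/13) : ℂ) := by
      rw [hz 1, show z ^ 12 = z ^ (13 - 1) from rfl, hzneg 1 (by norm_num)]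
      exact_mod_cast key (2*π*1/13)
    have e3 : z ^ 3 + z ^ 10 = 2 * (Real.cos (2*π*3/13) : ℂ) := by
      rw [hz 3, show (10:ℕ) = 13 - 3 from rfl, hzneg 3 (by norm_num)]
      exact_mod_cast key (2*π*3/13)
    have e4 : z ^ 4 + z ^ 9 = 2 * (Real.cos (2*π*4/13) : ℂ) := by
      rw [hz 4, show (9:ℕ) = 13 - 4 from rfl, hzneg 4 (by norm_num)]
      exact_mod_cast key (2*π*4/13)
    rw [hSdef, hrdef]
    simp only [Complex.ofReal_add, Complex.ofReal_mul, Complex.ofReal_ofNat]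
    linear_combination e1 + e3 + e4
  -- r is positive
  have hπ : (0:ℝ) < π := Real.pi_pos
  have hrpos : 0 < r := by
    have c1 : Real.cos (π/3) < Real.cos (2*π*1/13) := by
      apply Real.cos_lt_cos_of_nonneg_of_le_pi (by positivity)
      · nlinarith
      · nlinarith
    rw [Real.cos_pi_div_three] at c1
    have c2 : 0 < Real.cos (2*π*3/13) := by
      apply Real.cos_pos_of_mem_Ioo
      constructor <;> nlinarith
    have c3 : Real.cos (π - π/3) < Real.cos (2*π*4/13) := by
      apply Real.cos_lt_cos_of_nonneg_of_le_pi (by positivity)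
      · nlinarith
      · nlinarith
    rw [Real.cos_pi_sub, Real.cos_pi_div_three] at c3
    rw [hrdef]
    nlinarith
  -- r = (√13 - 1)/2
  have hrquad : r^2 + r - 3 = 0 := by
    have := hSquad
    rw [hSr] at this
    exact_mod_cast this
  have hsq : Real.sqrt 13 = 2*r + 1 := by
    have h1 : (2*r+1)^2 = 13 := by nlinarith
    rw [← h1, Real.sqrt_sq (by linarith)]
  have hrval : r = (Real.sqrt 13 - 1) / 2 := by rw [hsq]; ring
  have hSval : S = ((Real.sqrt 13 : ℝ) : ℂ) / 2 - 1 / 2 := by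
    rw [hSr, hrval]; push_cast; ring
  -- inverses
  have hzne : z ≠ 0 := Complex.exp_ne_zero _
  have hinv : ∀ k : ℕ, k ≤ 13 → (z ^ k)⁻¹ = z ^ (13 - k) := by
    intro k hk
    symm
    apply eq_inv_of_mul_eq_one_left
    rw [← pow_add, Nat.sub_add_cancel hk, h13]
  have hi1 : z⁻¹ = z ^ 12 := by
    have := hinv 1 (by norm_num); simpa using this
  have hi2 : (z ^ 2)⁻¹ = z ^ 11 := hinv 2 (by norm_num)
  have hi4 : (z ^ 4)⁻¹ = z ^ 9 := hinv 4 (by norm_num)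
  have hi7 : (z ^ 7)⁻¹ = z ^ 6 := hinv 7 (by norm_num)
  refine ⟨?_, ?_, ?_, ?_⟩
  · rw [χ₁, hi1, hi4]
    rw [hSdef] at hSval
    linear_combination hSval + z^3 * h13
  · rw [χ₂, χ₁, hi1, hi4]
    linear_combination hsum + (z^15 + z^8 + z^7 + z^6 + z^3 + z^2) * h13
  · rw [χ₁, hi2, hi7]
    rw [hSdef] at hSval
    linear_combination hsum - hSval + z^5 * h13
  · rw [χ₂, χ₁, hi2, hi7]
    linear_combination hsum + (z^16 + z^12 + z^5 + z^4 + z^3 + z) * h13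
end

section
/- With p = 2cos(4π/9) and q = 2cos(8π/9) and ζ = e^{2πi/9}: χ₁(ζ, ζ⁴) = −p, χ₂(ζ, ζ⁴) = p + q + 1; χ₁(ζ, ζ³) = −q, χ₂(ζ, ζ³) = 1 − p; χ₁(ζ², ζ⁵) = p + q, χ₂(ζ², ζ⁵) = 1 − q, where χ₁, χ₂ are the fundamental G₂ characters on the torus. -/
open Real in
theorem chi_at_ninth_roots :
    χ₁ (Complex.exp (2 * π * Complex.I / 9)) (Complex.exp (2 * π * Complex.I / 9) ^ 4)
        = -(2 * Real.cos (4 * π / 9)) ∧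
    χ₂ (Complex.exp (2 * π * Complex.I / 9)) (Complex.exp (2 * π * Complex.I / 9) ^ 4)
        = 2 * Real.cos (4 * π / 9) + 2 * Real.cos (8 * π / 9) + 1 ∧
    χ₁ (Complex.exp (2 * π * Complex.I / 9)) (Complex.exp (2 * π * Complex.I / 9) ^ 3)
        = -(2 * Real.cos (8 * π / 9)) ∧
    χ₂ (Complex.exp (2 * π * Complex.I / 9)) (Complex.exp (2 * π * Complex.I / 9) ^ 3)
        = 1 - 2 * Real.cos (4 * π / 9) ∧
    χ₁ (Complex.exp (2 * π * Complex.I / 9) ^ 2) (Complex.exp (2 * π * Complex.I / 9) ^ 5)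
        = 2 * Real.cos (4 * π / 9) + 2 * Real.cos (8 * π / 9) ∧
    χ₂ (Complex.exp (2 * π * Complex.I / 9) ^ 2) (Complex.exp (2 * π * Complex.I / 9) ^ 5)
        = 1 - 2 * Real.cos (8 * π / 9) := by
  set z := Complex.exp (2 * π * Complex.I / 9) with hzdef
  have hz : z ≠ 0 := Complex.exp_ne_zero _
  have hz9 : z ^ 9 = 1 := by
    rw [hzdef, ← Complex.exp_nat_mul,
      show (9 : ℕ) * (2 * (π : ℂ) * Complex.I / 9) = 2 * π * Complex.I by push_cast; ring,
      Complex.exp_two_pi_mul_I]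
  have hw : z ^ 3 = Complex.exp ((2 * π / 3 : ℝ) * Complex.I) := by
    rw [hzdef, ← Complex.exp_nat_mul]; congr 1; push_cast; ring
  have hwne : z ^ 3 ≠ 1 := by
    intro hcon
    have h1 : (z ^ 3).re = Real.cos (2 * π / 3) := by
      rw [hw, Complex.exp_ofReal_mul_I_re]
    have h2 : Real.cos (2 * π / 3) = -(1 / 2) := by
      rw [show (2 * π / 3 : ℝ) = π - π / 3 by ring, Real.cos_pi_sub, Real.cos_pi_div_three]
    rw [hcon] at h1
    norm_num [h2] at h1
  have hΦ : z ^ 6 + z ^ 3 + 1 = 0 := by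
    have hm : (z ^ 3 - 1) * (z ^ 6 + z ^ 3 + 1) = 0 := by linear_combination hz9
    rcases mul_eq_zero.mp hm with h | h
    · exact absurd (by linear_combination h) hwne
    · exact h
  have hc2 : ((Real.cos (4 * π / 9) : ℝ) : ℂ) = (z ^ 2 + (z ^ 2)⁻¹) / 2 := by
    have h2 : z ^ 2 = Complex.exp ((4 * π / 9 : ℝ) * Complex.I) := by
      rw [hzdef, ← Complex.exp_nat_mul]; congr 1; push_cast; ring
    rw [h2, ← Complex.exp_neg, Complex.ofReal_cos, eq_div_iff (two_ne_zero' ℂ),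
      mul_comm, Complex.two_cos, neg_mul]
  have hc4 : ((Real.cos (8 * π / 9) : ℝ) : ℂ) = (z ^ 4 + (z ^ 4)⁻¹) / 2 := by
    have h2 : z ^ 4 = Complex.exp ((8 * π / 9 : ℝ) * Complex.I) := by
      rw [hzdef, ← Complex.exp_nat_mul]; congr 1; push_cast; ring
    rw [h2, ← Complex.exp_neg, Complex.ofReal_cos, eq_div_iff (two_ne_zero' ℂ),
      mul_comm, Complex.two_cos, neg_mul]
  have hinv : z⁻¹ = z ^ 8 := by
    exact inv_eq_of_mul_eq_one_right (by linear_combination hz9)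
  refine ⟨?_, ?_, ?_, ?_, ?_, ?_⟩ <;>
    simp only [χ₁, χ₂, hc2, hc4, ← inv_pow, hinv]
  · linear_combination (z ^ 27 + z ^ 26 - z ^ 24 - z ^ 23 + z ^ 18 + z ^ 17 - z ^ 15 - z ^ 14 + z ^ 10 + z ^ 9 + z ^ 8 - z ^ 7 - z ^ 5 - z ^ 3 + z ^ 2 + z + 1) * hΦ
  · linear_combination (z ^ 59 - z ^ 56 + z ^ 50 - z ^ 47 + z ^ 41 - z ^ 38 + z ^ 34 + z ^ 32 - z ^ 31 - z ^ 29 + z ^ 28 + z ^ 27 - z ^ 24 + z ^ 23 - z ^ 22 - z ^ 20 + z ^ 19 + z ^ 18 - z ^ 15 + 2 * z ^ 14 - z ^ 13 - 2 * z ^ 11 + z ^ 10 + z ^ 9 + 2 * z ^ 5 - z ^ 4 - z ^ 3 - z ^ 2 + z + 1) * hΦ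
  · linear_combination (z ^ 26 - z ^ 23 + z ^ 19 + z ^ 18 + z ^ 17 - z ^ 16 - z ^ 15 - z ^ 14 + z ^ 10 + z ^ 9 + z ^ 8 - z ^ 7 - z ^ 6 + z + 1) * hΦ
  · linear_combination (z ^ 43 - z ^ 40 + z ^ 34 - z ^ 31 + z ^ 26 + z ^ 25 - z ^ 23 - z ^ 22 + z ^ 20 + z ^ 19 + z ^ 18 - z ^ 15 - z ^ 14 + z ^ 11 + z ^ 10 + z ^ 9 + z ^ 8 - z ^ 7 - z ^ 6 - z ^ 5 + z ^ 2 + z + 1) * hΦ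
  · linear_combination (z ^ 36 + z ^ 34 - z ^ 33 - z ^ 31 + z ^ 27 - z ^ 26 + z ^ 25 - z ^ 24 + z ^ 23 - z ^ 22 + z ^ 18 - z ^ 17 + z ^ 16 + z ^ 14 - z ^ 13 - z ^ 12 + z ^ 9 - z ^ 8 + z ^ 7 + z ^ 5 - z ^ 4 - z ^ 3 + 1) * hΦ
  · linear_combination (z ^ 76 - z ^ 73 + z ^ 67 - z ^ 64 + z ^ 58 - z ^ 55 + z ^ 50 + z ^ 49 - z ^ 47 - z ^ 46 + z ^ 41 + z ^ 40 - z ^ 37 + z ^ 36 - z ^ 35 + z ^ 34 - z ^ 33 + z ^ 32 + z ^ 31 - 2 * z ^ 28 + z ^ 27 + z ^ 25 - z ^ 24 + z ^ 22 + z ^ 20 - 2 * z ^ 19 + z ^ 18 - z ^ 17 + z ^ 16 + z ^ 13 - z ^ 12 + z ^ 11 - z ^ 10 + z ^ 9 - z ^ 8 + z ^ 4 - z ^ 3 + z ^ 2 + 1) * hΦ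
end

section
/- Let J(θ₁,θ₂) = 8π²(cos(2π(2θ₁+θ₂)) + cos(2π(θ₁−3θ₂)) + cos(2π(3θ₁−2θ₂)) − cos(2π(θ₁+2θ₂)) − cos(2π(3θ₁−θ₂)) − cos(2π(2θ₁−3θ₂))). Then J(1/9, 4/9)² = 64π⁴ · (9/4)(3 + 2cos(π/9) + 2cos(2π/9)), J(1/9, 1/3)² = 64π⁴ · (9/4)(3 − 2cos(2π/9) + 2sin(π/18)), and J(2/9, 5/9)² = 64π⁴ · (9/4)(3 − 2cos(π/9) − 2sin(π/18)). -/
open Real in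
/-- The Jacobian of the change of variables (θ₁,θ₂) ↦ (x,y). -/
noncomputable def Jac (θ₁ θ₂ : ℝ) : ℝ :=
  8 * π ^ 2 * (cos (2 * π * (2 * θ₁ + θ₂)) + cos (2 * π * (θ₁ - 3 * θ₂))
    + cos (2 * π * (3 * θ₁ - 2 * θ₂)) - cos (2 * π * (θ₁ + 2 * θ₂))
    - cos (2 * π * (3 * θ₁ - θ₂)) - cos (2 * π * (2 * θ₁ - 3 * θ₂)))

open Real in
theorem Jac_sq_ninth_values :
    Jac (1/9) (4/9) ^ 2 = 64 * π ^ 4 * ((9/4) * (3 + 2 * Real.cos (π/9) + 2 * Real.cos (2*π/9))) ∧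
    Jac (1/9) (1/3) ^ 2 = 64 * π ^ 4 * ((9/4) * (3 - 2 * Real.cos (2*π/9) + 2 * Real.sin (π/18))) ∧
    Jac (2/9) (5/9) ^ 2 = 64 * π ^ 4 * ((9/4) * (3 - 2 * Real.cos (π/9) - 2 * Real.sin (π/18))) := by
  have hc : 8 * Real.cos (π/9) ^ 3 - 6 * Real.cos (π/9) - 1 = 0 := by
    have h := Real.cos_three_mul (π/9)
    rw [show 3 * (π/9) = π/3 by ring, Real.cos_pi_div_three] at h
    linarith
  have h2 : Real.cos (2*π/9) = 2 * Real.cos (π/9) ^ 2 - 1 := by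
    rw [show 2*π/9 = 2 * (π/9) by ring, Real.cos_two_mul]
  have h4 : Real.cos (4*π/9) = 2 * (2 * Real.cos (π/9) ^ 2 - 1) ^ 2 - 1 := by
    rw [show 4*π/9 = 2 * (2*π/9) by ring, Real.cos_two_mul, h2]
  have hs : Real.sin (π/18) = Real.cos (4*π/9) := by
    rw [show 4*π/9 = π/2 - π/18 by ring, Real.cos_pi_div_two_sub]
  refine ⟨?_, ?_, ?_⟩
  · rw [Jac,
      show 2*π*(2*(1/9 : ℝ)+4/9) = π/3 + π by ring, Real.cos_add_pi, Real.cos_pi_div_three,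
      show 2*π*((1/9 : ℝ) - 3*(4/9)) = -(4*π/9 + 2*π) by ring, Real.cos_neg,
        Real.cos_add_two_pi,
      show 2*π*(3*(1/9 : ℝ) - 2*(4/9)) = -(π/9 + π) by ring, Real.cos_neg, Real.cos_add_pi,
      show 2*π*((1/9 : ℝ) + 2*(4/9)) = 0 + 2*π by ring, Real.cos_add_two_pi, Real.cos_zero,
      show 2*π*(3*(1/9 : ℝ) - 4/9) = -(2*π/9) by ring, Real.cos_neg,
      show 2*π*(2*(1/9 : ℝ) - 3*(4/9)) = -(2*π/9 + 2*π) by ring, Real.cos_neg,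
        Real.cos_add_two_pi, h2, h4]
    linear_combination (64 * π^4 * (8 * Real.cos (π/9)^5 - 18 * Real.cos (π/9)^3
      - Real.cos (π/9)^2 + (15/2) * Real.cos (π/9))) * hc
  · rw [Jac,
      show 2*π*(2*(1/9 : ℝ)+1/3) = π/9 + π by ring, Real.cos_add_pi,
      show 2*π*((1/9 : ℝ) - 3*(1/3)) = 2*π/9 - 2*π by ring, Real.cos_sub_two_pi,
      show 2*π*(3*(1/9 : ℝ) - 2*(1/3)) = -(π - π/3) by ring, Real.cos_neg, Real.cos_pi_sub,
        Real.cos_pi_div_three,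
      show 2*π*((1/9 : ℝ) + 2*(1/3)) = -(4*π/9) + 2*π by ring, Real.cos_add_two_pi,
        Real.cos_neg,
      show 2*π*(3*(1/9 : ℝ) - 1/3) = 0 by ring, Real.cos_zero,
      show 2*π*(2*(1/9 : ℝ) - 3*(1/3)) = 4*π/9 - 2*π by ring, Real.cos_sub_two_pi,
      hs, h2, h4]
    linear_combination (64 * π^4 * (32 * Real.cos (π/9)^5 - 48 * Real.cos (π/9)^3
      + 8 * Real.cos (π/9)^2 + 18 * Real.cos (π/9) - 9/2)) * hc
  · rw [Jac,
      show 2*π*(2*(2/9 : ℝ)+5/9) = 0 + 2*π by ring, Real.cos_add_two_pi, Real.cos_zero,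
      show 2*π*((2/9 : ℝ) - 3*(5/9)) = -((π - π/9) + 2*π) by ring, Real.cos_neg,
        Real.cos_add_two_pi, Real.cos_pi_sub,
      show 2*π*(3*(2/9 : ℝ) - 2*(5/9)) = -(π - π/9) by ring, Real.cos_neg, Real.cos_pi_sub,
      show 2*π*((2/9 : ℝ) + 2*(5/9)) = (π - π/3) + 2*π by ring, Real.cos_add_two_pi,
        Real.cos_pi_sub, Real.cos_pi_div_three,
      show 2*π*(3*(2/9 : ℝ) - 5/9) = 2*π/9 by ring,
      show 2*π*(2*(2/9 : ℝ) - 3*(5/9)) = -(4*π/9 + 2*π) by ring, Real.cos_neg,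
        Real.cos_add_two_pi,
      hs, h2, h4]
    linear_combination (64 * π^4 * (8 * Real.cos (π/9)^5 - 6 * Real.cos (π/9)^3
      + 5 * Real.cos (π/9)^2 + (3/2) * Real.cos (π/9))) * hc
end

section
/- For every pair (t₁,t₂) ∈ 𝕋² and every element g of the dihedral group D₁₂ generated by T₂ = [[0,-1],[-1,0]] and T₆ = [[0,1],[-1,1]] acting on 𝕋² via exponents, the multiset {1, s₁, s₁⁻¹, s₂, s₂⁻¹, s₁s₂⁻¹, s₁⁻¹s₂} equals the multiset {1, t₁, t₁⁻¹, t₂, t₂⁻¹, t₁t₂⁻¹, t₁⁻¹t₂}, where (s₁,s₂) = g(t₁,t₂). -/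
def T2mat : Matrix (Fin 2) (Fin 2) ℤ := !![0, -1; -1, 0]
def T6mat : Matrix (Fin 2) (Fin 2) ℤ := !![0, 1; -1, 1]

/-- T₂ as an element of GL(2,ℤ) (the units of the 2×2 integer matrices). -/
def T2 : (Matrix (Fin 2) (Fin 2) ℤ)ˣ := ⟨T2mat, T2mat, by decide, by decide⟩

/-- T₆ as an element of GL(2,ℤ). -/
def T6 : (Matrix (Fin 2) (Fin 2) ℤ)ˣ := ⟨T6mat, !![1, -1; 1, 0], by decide, by decide⟩

/-- Action of an integer matrix on 𝕋² ⊂ ℂ² via exponents. -/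
noncomputable def act (T : Matrix (Fin 2) (Fin 2) ℤ) (ω : ℂ × ℂ) : ℂ × ℂ :=
  (ω.1 ^ T 0 0 * ω.2 ^ T 0 1, ω.1 ^ T 1 0 * ω.2 ^ T 1 1)

/-- The multiset of eigenvalues of a torus element of G₂ in the 7-dim. representation. -/
noncomputable def eigMultiset (t₁ t₂ : ℂ) : Multiset ℂ :=
  {1, t₁, t₁⁻¹, t₂, t₂⁻¹, t₁ * t₂⁻¹, t₁⁻¹ * t₂}

lemma act_mul (A B : Matrix (Fin 2) (Fin 2) ℤ) (t₁ t₂ : ℂ) (h1 : t₁ ≠ 0) (h2 : t₂ ≠ 0) :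
    act (A * B) (t₁, t₂) = act A (act B (t₁, t₂)) := by
  simp only [act, Matrix.mul_apply, Fin.sum_univ_two, mul_zpow, ← zpow_mul,
    zpow_add₀ h1, zpow_add₀ h2]
  refine Prod.ext ?_ ?_ <;>
    · dsimp only; rw [mul_comm (A _ 0) (B 0 _), mul_comm (A _ 1) (B 1 _)]; ring_nf

lemma act_one (t₁ t₂ : ℂ) : act (1 : Matrix (Fin 2) (Fin 2) ℤ) (t₁, t₂) = (t₁, t₂) := by
  simp [act, Matrix.one_apply]

lemma act_ne (A : Matrix (Fin 2) (Fin 2) ℤ) (t₁ t₂ : ℂ) (h1 : t₁ ≠ 0) (h2 : t₂ ≠ 0) :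
    (act A (t₁, t₂)).1 ≠ 0 ∧ (act A (t₁, t₂)).2 ≠ 0 := by
  constructor <;> exact mul_ne_zero (zpow_ne_zero _ h1) (zpow_ne_zero _ h2)

lemma act_T2 (t₁ t₂ : ℂ) : act T2mat (t₁, t₂) = (t₂⁻¹, t₁⁻¹) := by
  simp [act, T2mat]

lemma act_T6 (t₁ t₂ : ℂ) : act T6mat (t₁, t₂) = (t₂, t₁⁻¹ * t₂) := by
  simp [act, T6mat]

lemma rev4 {α : Type*} (a b c d : α) (s : Multiset α) :
    a ::ₘ b ::ₘ c ::ₘ d ::ₘ s = d ::ₘ c ::ₘ b ::ₘ a ::ₘ s := by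
  rw [Multiset.cons_swap a b, Multiset.cons_swap a c, Multiset.cons_swap a d,
      Multiset.cons_swap b c, Multiset.cons_swap b d, Multiset.cons_swap c d]

lemma eig_T2 (t₁ t₂ : ℂ) : eigMultiset t₂⁻¹ t₁⁻¹ = eigMultiset t₁ t₂ := by
  simp only [eigMultiset, inv_inv]
  rw [mul_comm t₂⁻¹ t₁, mul_comm t₂ t₁⁻¹]
  refine Multiset.cons_eq_cons.mpr (Or.inl ⟨rfl, ?_⟩)
  exact rev4 t₂⁻¹ t₂ t₁⁻¹ t₁ _

lemma eig_T6 (t₁ t₂ : ℂ) (h1 : t₁ ≠ 0) (h2 : t₂ ≠ 0) :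
    eigMultiset t₂ (t₁⁻¹ * t₂) = eigMultiset t₁ t₂ := by
  have e1 : (t₁⁻¹ * t₂)⁻¹ = t₁ * t₂⁻¹ := by rw [mul_inv, inv_inv]
  have e2 : t₂ * (t₁ * t₂⁻¹) = t₁ := by field_simp
  have e3 : t₂⁻¹ * (t₁⁻¹ * t₂) = t₁⁻¹ := by field_simp
  simp only [eigMultiset, e1, e2, e3]
  refine Multiset.cons_eq_cons.mpr (Or.inl ⟨rfl, ?_⟩)
  set u := t₁⁻¹ * t₂ with hu
  set v := t₁ * t₂⁻¹ with hv
  simp only [Multiset.insert_eq_cons]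
  -- goal: t₂ ::ₘ t₂⁻¹ ::ₘ u ::ₘ v ::ₘ t₁ ::ₘ t₁⁻¹ ::ₘ 0 = t₁ ::ₘ t₁⁻¹ ::ₘ t₂ ::ₘ t₂⁻¹ ::ₘ v ::ₘ u ::ₘ 0
  rw [Multiset.cons_swap u v, Multiset.cons_swap u t₁, Multiset.cons_swap v t₁,
      Multiset.cons_swap t₂⁻¹ t₁, Multiset.cons_swap t₂ t₁,
      ← Multiset.cons_zero t₁⁻¹, ← Multiset.cons_zero u,
      Multiset.cons_swap u t₁⁻¹, Multiset.cons_swap v t₁⁻¹,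
      Multiset.cons_swap t₂⁻¹ t₁⁻¹, Multiset.cons_swap t₂ t₁⁻¹]

theorem eigMultiset_D12_invariant :
    ∀ t₁ t₂ : ℂ, ‖t₁‖ = 1 → ‖t₂‖ = 1 →
      ∀ g ∈ Subgroup.closure ({T2, T6} : Set (Matrix (Fin 2) (Fin 2) ℤ)ˣ),
        eigMultiset (act (g : Matrix (Fin 2) (Fin 2) ℤ) (t₁, t₂)).1
            (act (g : Matrix (Fin 2) (Fin 2) ℤ) (t₁, t₂)).2
          = eigMultiset t₁ t₂ := by
  have key : ∀ g ∈ Subgroup.closure ({T2, T6} : Set (Matrix (Fin 2) (Fin 2) ℤ)ˣ),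
      ∀ t₁ t₂ : ℂ, t₁ ≠ 0 → t₂ ≠ 0 →
        eigMultiset (act (g : Matrix (Fin 2) (Fin 2) ℤ) (t₁, t₂)).1
            (act (g : Matrix (Fin 2) (Fin 2) ℤ) (t₁, t₂)).2
          = eigMultiset t₁ t₂ := by
    intro g hg
    induction hg using Subgroup.closure_induction with
    | mem x hx =>
      intro t₁ t₂ h1 h2
      rcases hx with rfl | rfl
      · rw [show ((T2 : (Matrix (Fin 2) (Fin 2) ℤ)ˣ) : Matrix (Fin 2) (Fin 2) ℤ) = T2mat from rfl,
            act_T2]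
        exact eig_T2 t₁ t₂
      · rw [show ((T6 : (Matrix (Fin 2) (Fin 2) ℤ)ˣ) : Matrix (Fin 2) (Fin 2) ℤ) = T6mat from rfl,
            act_T6]
        exact eig_T6 t₁ t₂ h1 h2
    | one =>
      intro t₁ t₂ h1 h2
      rw [Units.val_one, act_one]
    | mul x y hx hy ihx ihy =>
      intro t₁ t₂ h1 h2
      rw [Units.val_mul, act_mul _ _ _ _ h1 h2]
      obtain ⟨n1, n2⟩ := act_ne (y : Matrix (Fin 2) (Fin 2) ℤ) t₁ t₂ h1 h2
      rw [show act (y : Matrix (Fin 2) (Fin 2) ℤ) (t₁, t₂) =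
            ((act (y : Matrix (Fin 2) (Fin 2) ℤ) (t₁, t₂)).1,
             (act (y : Matrix (Fin 2) (Fin 2) ℤ) (t₁, t₂)).2) from rfl]
      rw [ihx _ _ n1 n2, ihy t₁ t₂ h1 h2]
    | inv x hx ihx =>
      intro t₁ t₂ h1 h2
      obtain ⟨n1, n2⟩ := act_ne ((x⁻¹ : _) : Matrix (Fin 2) (Fin 2) ℤ) t₁ t₂ h1 h2
      have := ihx (act ((x⁻¹ : _) : Matrix (Fin 2) (Fin 2) ℤ) (t₁, t₂)).1
        (act ((x⁻¹ : _) : Matrix (Fin 2) (Fin 2) ℤ) (t₁, t₂)).2 n1 n2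
      rw [show ((act ((x⁻¹ : _) : Matrix (Fin 2) (Fin 2) ℤ) (t₁, t₂)).1,
            (act ((x⁻¹ : _) : Matrix (Fin 2) (Fin 2) ℤ) (t₁, t₂)).2) =
            act ((x⁻¹ : _) : Matrix (Fin 2) (Fin 2) ℤ) (t₁, t₂) from rfl] at this
      rw [← act_mul _ _ _ _ h1 h2, ← Units.val_mul, mul_inv_cancel, Units.val_one, act_one] at this
      rw [← this]
  intro t₁ t₂ h1 h2 g hg
  exact key g hg t₁ t₂ (by intro h; simp [h] at h1) (by intro h; simp [h] at h2)
end
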